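/- A connected graph G is (C₄,P₄)-free if and only if G is a complete graph, or there exist m ≥ 1, k ≥ 2, and connected (C₄,P₄)-free graphs G₁,...,G_k such that G is the join of the complete graph K_m with the disjoint union G₁ ∪ ... ∪ G_k. -/

import Mathlib

open SimpleGraph

/-- A coloring of the vertices with colors `0, ..., k-1` which uses all `k` colors and such
that every pair of distinct colors appears on the endpoints of some edge. -/
def IsCompleteColoring {V : Type*} (G : SimpleGraph V) (c : V → ℕ) (k : ℕ) : Prop :=
  (∀ v, c v < k) ∧ (∀ i, i < k → ∃ v, c v = i) ∧
    ∀ i j, i < k → j < k → i ≠ j → ∃ u w, G.Adj u w ∧ c u = i ∧ c w = j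

/-- A proper coloring: adjacent vertices get distinct colors. -/
def IsProperColoring {V : Type*} (G : SimpleGraph V) (c : V → ℕ) : Prop :=
  ∀ u w, G.Adj u w → c u ≠ c w

/-- A Grundy coloring with `k` colors: proper, uses all `k` colors, and every vertex of
color `j` has, for each `i < j`, a neighbor colored `i`. -/
def IsGrundyColoring {V : Type*} (G : SimpleGraph V) (c : V → ℕ) (k : ℕ) : Prop :=
  (∀ v, c v < k) ∧ (∀ i, i < k → ∃ v, c v = i) ∧ IsProperColoring G c ∧
    ∀ v i, i < c v → ∃ u, G.Adj u v ∧ c u = i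

/-- The pseudoachromatic number `ψ`. -/
noncomputable def pseudoachromaticNumber {V : Type*} (G : SimpleGraph V) : ℕ :=
  sSup {k | ∃ c, IsCompleteColoring G c k}

/-- The achromatic number `α`. -/
noncomputable def achromaticNumber {V : Type*} (G : SimpleGraph V) : ℕ :=
  sSup {k | ∃ c, IsCompleteColoring G c k ∧ IsProperColoring G c}

/-- The Grundy number `Γ`. -/
noncomputable def grundyNumber {V : Type*} (G : SimpleGraph V) : ℕ :=
  sSup {k | ∃ c, IsGrundyColoring G c k}

/-- The chromatic number `χ` (as a natural number). -/
noncomputable def chromNumber {V : Type*} (G : SimpleGraph V) : ℕ :=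
  sInf {k | ∃ c : V → ℕ, (∀ v, c v < k) ∧ IsProperColoring G c}

/-- The clique number `ω`. -/
noncomputable def cliqueNumber {V : Type*} (G : SimpleGraph V) : ℕ :=
  sSup {n | ∃ s : Finset V, G.IsNClique n s}

/-- `G` is `H`-free: no induced subgraph of `G` is isomorphic to `H`. -/
def GraphFree {V W : Type*} (G : SimpleGraph V) (H : SimpleGraph W) : Prop :=
  ∀ s : Set V, IsEmpty ((G.induce s) ≃g H)

/-- `G` is `ωψ`-perfect. -/
def OmegaPsiPerfect {V : Type*} (G : SimpleGraph V) : Prop :=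
  ∀ s : Set V, cliqueNumber (G.induce s) = pseudoachromaticNumber (G.induce s)

/-- `G` is `χψ`-perfect. -/
def ChiPsiPerfect {V : Type*} (G : SimpleGraph V) : Prop :=
  ∀ s : Set V, chromNumber (G.induce s) = pseudoachromaticNumber (G.induce s)

/-- The path on 4 vertices. -/
def pathP4 : SimpleGraph (Fin 4) :=
  SimpleGraph.fromRel (fun a b => (b : ℕ) = (a : ℕ) + 1)

/-- The cycle on 4 vertices. -/
def cycleC4 : SimpleGraph (Fin 4) :=
  SimpleGraph.fromRel (fun a b => b = a + 1)

/-- The disjoint union of a path on 3 vertices and an edge. -/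
def graphP3K2 : SimpleGraph (Fin 5) :=
  SimpleGraph.fromRel (fun a b => (a, b) ∈ [((0 : Fin 5), (1 : Fin 5)), (1, 2), (3, 4)])

/-- The disjoint union of three edges. -/
def graph3K2 : SimpleGraph (Fin 6) :=
  SimpleGraph.fromRel (fun a b => (a, b) ∈ [((0 : Fin 6), (1 : Fin 6)), (2, 3), (4, 5)])

/-- The join of two graphs. -/
def graphJoin {V W : Type*} (G : SimpleGraph V) (H : SimpleGraph W) : SimpleGraph (V ⊕ W) :=
  SimpleGraph.fromRel (fun x y =>
    match x, y with
    | Sum.inl a, Sum.inl b => G.Adj a b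
    | Sum.inr a, Sum.inr b => H.Adj a b
    | _, _ => True)

/-- The disjoint union of two graphs. -/
def graphSum {V W : Type*} (G : SimpleGraph V) (H : SimpleGraph W) : SimpleGraph (V ⊕ W) :=
  SimpleGraph.fromRel (fun x y =>
    match x, y with
    | Sum.inl a, Sum.inl b => G.Adj a b
    | Sum.inr a, Sum.inr b => H.Adj a b
    | _, _ => False)

/-- The disjoint union of a family of graphs. -/
def graphSigma {ι : Type} {U : ι → Type} (f : ∀ i, SimpleGraph (U i)) :
    SimpleGraph (Σ i, U i) :=
  SimpleGraph.fromRel (fun x y => ∃ h : x.1 = y.1, (f y.1).Adj (h ▸ x.2) y.2)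


section Helpers
open Function
variable {V : Type*} (G : SimpleGraph V)

def IndP4 : Prop :=
  ∃ a b c d : V, G.Adj a b ∧ G.Adj b c ∧ G.Adj c d ∧ ¬G.Adj a c ∧ ¬G.Adj a d ∧ ¬G.Adj b d

def IndC4 : Prop :=
  ∃ a b c d : V, a ≠ c ∧ b ≠ d ∧
    G.Adj a b ∧ G.Adj b c ∧ G.Adj c d ∧ G.Adj d a ∧ ¬G.Adj a c ∧ ¬G.Adj b d

lemma graphFree_iff {n : ℕ} (H : SimpleGraph (Fin n)) :
    GraphFree G H ↔ ∀ f : Fin n → V, Injective f → ¬(∀ i j, G.Adj (f i) (f j) ↔ H.Adj i j) := by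
  constructor
  · intro hfree f hf hadj
    refine (hfree (Set.range f)).elim ?_
    refine ⟨(Equiv.ofInjective f hf).symm, ?_⟩
    rintro ⟨x, hx⟩ ⟨y, hy⟩
    obtain ⟨i, rfl⟩ := hx
    obtain ⟨j, rfl⟩ := hy
    have hi : (Equiv.ofInjective f hf).symm ⟨f i, ⟨i, rfl⟩⟩ = i :=
      (Equiv.ofInjective f hf).symm_apply_apply _
    have hj : (Equiv.ofInjective f hf).symm ⟨f j, ⟨j, rfl⟩⟩ = j :=
      (Equiv.ofInjective f hf).symm_apply_apply _
    rw [hi, hj]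
    simpa [comap_adj] using (hadj i j).symm
  · intro h s
    constructor
    intro phi
    refine h (fun i => (phi.symm i : V)) ?_ ?_
    · exact Subtype.val_injective.comp (Injective.comp phi.symm.injective fun _ _ => id)
    · intro i j
      have := phi.symm.map_rel_iff (a := i) (b := j)
      simpa [comap_adj] using this

lemma free_P4_iff : GraphFree G pathP4 ↔ ¬ IndP4 G := by
  rw [graphFree_iff]
  constructor
  · rintro h ⟨a, b, c, d, h1, h2, h3, n1, n2, n3⟩
    have hab := h1.ne
    have hbc := h2.ne
    have hcd := h3.ne
    have hac : a ≠ c := fun e => n2 (e ▸ h3)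
    have had : a ≠ d := fun e => n1 (by rw [e]; exact h3.symm)
    have hbd : b ≠ d := fun e => n2 (e ▸ h1)
    refine h ![a, b, c, d] ?_ ?_
    · intro i j hij
      fin_cases i <;> fin_cases j <;> simp_all
    · intro i j
      fin_cases i <;> fin_cases j <;>
        simp [pathP4, fromRel_adj, G.irrefl, h1, h2, h3, h1.symm, h2.symm, h3.symm,
          n1, n2, n3, fun h => n1 (G.adj_symm h), fun h => n2 (G.adj_symm h), fun h => n3 (G.adj_symm h),
          hab, hbc, hcd, hac, had, hbd, Fin.ext_iff] <;> tauto
  · intro h f hf hadj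
    have key : pathP4.Adj 0 1 ∧ pathP4.Adj 1 2 ∧ pathP4.Adj 2 3 ∧ ¬pathP4.Adj 0 2 ∧
        ¬pathP4.Adj 0 3 ∧ ¬pathP4.Adj 1 3 := by
      simp only [pathP4, fromRel_adj]; decide
    obtain ⟨k1, k2, k3, k4, k5, k6⟩ := key
    exact h ⟨f 0, f 1, f 2, f 3, (hadj 0 1).mpr k1, (hadj 1 2).mpr k2, (hadj 2 3).mpr k3,
      fun hh => k4 ((hadj 0 2).mp hh),
      fun hh => k5 ((hadj 0 3).mp hh),
      fun hh => k6 ((hadj 1 3).mp hh)⟩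

lemma free_C4_iff : GraphFree G cycleC4 ↔ ¬ IndC4 G := by
  rw [graphFree_iff]
  constructor
  · rintro h ⟨a, b, c, d, hac, hbd, h1, h2, h3, h4, n1, n2⟩
    have hab := h1.ne
    have hbc := h2.ne
    have hcd := h3.ne
    have had := h4.ne.symm
    refine h ![a, b, c, d] ?_ ?_
    · intro i j hij
      fin_cases i <;> fin_cases j <;> simp_all
    · intro i j
      fin_cases i <;> fin_cases j <;>
        simp [cycleC4, fromRel_adj, G.irrefl, h1, h2, h3, h4, h1.symm, h2.symm, h3.symm, h4.symm,
          n1, n2, fun h => n1 (G.adj_symm h), fun h => n2 (G.adj_symm h),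
          hab, hbc, hcd, hac, had, hbd, Fin.ext_iff] <;> tauto
  · intro h f hf hadj
    have key : cycleC4.Adj 0 1 ∧ cycleC4.Adj 1 2 ∧ cycleC4.Adj 2 3 ∧ cycleC4.Adj 3 0 ∧
        ¬cycleC4.Adj 0 2 ∧ ¬cycleC4.Adj 1 3 := by
      simp only [cycleC4, fromRel_adj]; decide
    obtain ⟨k1, k2, k3, k4, k5, k6⟩ := key
    exact h ⟨f 0, f 1, f 2, f 3, hf.ne (by decide), hf.ne (by decide),
      (hadj 0 1).mpr k1, (hadj 1 2).mpr k2, (hadj 2 3).mpr k3, (hadj 3 0).mpr k4,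
      fun hh => k5 ((hadj 0 2).mp hh),
      fun hh => k6 ((hadj 1 3).mp hh)⟩

variable {G}

lemma indP4_map {W : Type*} {G' : SimpleGraph W} (f : V → W)
    (ha : ∀ a b, G.Adj a b ↔ G'.Adj (f a) (f b)) : IndP4 G → IndP4 G' := by
  rintro ⟨a, b, c, d, h1, h2, h3, n1, n2, n3⟩
  exact ⟨f a, f b, f c, f d, (ha _ _).mp h1, (ha _ _).mp h2, (ha _ _).mp h3,
    fun h => n1 ((ha _ _).mpr h), fun h => n2 ((ha _ _).mpr h), fun h => n3 ((ha _ _).mpr h)⟩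

lemma indC4_map {W : Type*} {G' : SimpleGraph W} (f : V → W) (hf : Injective f)
    (ha : ∀ a b, G.Adj a b ↔ G'.Adj (f a) (f b)) : IndC4 G → IndC4 G' := by
  rintro ⟨a, b, c, d, hac, hbd, h1, h2, h3, h4, n1, n2⟩
  exact ⟨f a, f b, f c, f d, hf.ne hac, hf.ne hbd, (ha _ _).mp h1, (ha _ _).mp h2,
    (ha _ _).mp h3, (ha _ _).mp h4,
    fun h => n1 ((ha _ _).mpr h), fun h => n2 ((ha _ _).mpr h)⟩

lemma common_neighbor (hP4 : ¬ IndP4 G) :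
    ∀ {v u : V}, G.Walk v u → v ≠ u → ¬ G.Adj v u → ∃ x, G.Adj v x ∧ G.Adj x u := by
  intro v u w
  induction w with
  | nil => intro hne _; exact absurd rfl hne
  | @cons v x1 u h p ih =>
    intro hne hnadj
    by_cases hx1u : x1 = u
    · exact absurd (hx1u ▸ h) hnadj
    by_cases hax1u : G.Adj x1 u
    · exact ⟨x1, h, hax1u⟩
    obtain ⟨w', hw1, hw2⟩ := ih hx1u hax1u
    by_cases hvw' : G.Adj v w'
    · exact ⟨w', hvw', hw2⟩
    · exact absurd ⟨v, x1, w', u, h, hw1, hw2, hvw', hnadj, hax1u⟩ hP4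

lemma exists_universal [Fintype V] (hc : G.Connected)
    (hP4 : ¬ IndP4 G) (hC4 : ¬ IndC4 G) : ∃ v : V, ∀ u, u ≠ v → G.Adj v u := by
  classical
  have hne : Nonempty V := hc.nonempty
  obtain ⟨v, -, hv⟩ := Finset.exists_max_image Finset.univ
    (fun v => (Finset.univ.filter (G.Adj v ·)).card) ⟨hne.some, Finset.mem_univ _⟩
  refine ⟨v, fun u hu => ?_⟩
  by_contra hnadj
  have hnadj' : ¬ G.Adj v u := hnadj
  obtain ⟨w, hvw, hwu⟩ := common_neighbor hP4 (hc.preconnected v u).some (Ne.symm hu) hnadj'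
  have key : ∀ x, G.Adj v x → x ≠ w → G.Adj w x := by
    intro x hvx hxw
    by_contra hwx
    have hxw' : ¬ G.Adj x w := fun h => hwx h.symm
    by_cases hxu' : G.Adj x u
    · exact hC4 ⟨v, x, u, w, Ne.symm hu, hxw, hvx, hxu', hwu.symm, hvw.symm, hnadj', hxw'⟩
    · exact hP4 ⟨x, v, w, u, hvx.symm, hvw, hwu, hxw', hxu', hnadj'⟩
  set Nv := Finset.univ.filter (G.Adj v ·) with hNv
  set Nw := Finset.univ.filter (G.Adj w ·) with hNw
  have hsub : insert v (insert u (Nv.erase w)) ⊆ Nw := by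
    intro x hx
    simp only [Finset.mem_insert, Finset.mem_erase, hNv, Finset.mem_filter,
      Finset.mem_univ, true_and] at hx
    simp only [hNw, Finset.mem_filter, Finset.mem_univ, true_and]
    rcases hx with rfl | rfl | ⟨hxw, hvx⟩
    · exact hvw.symm
    · exact hwu
    · exact key x hvx hxw
  have hvmem : v ∉ insert u (Nv.erase w) := by
    simp only [Finset.mem_insert, Finset.mem_erase, hNv, Finset.mem_filter,
      Finset.mem_univ, true_and]
    push_neg
    exact ⟨fun e => hu e.symm, fun _ => G.irrefl⟩
  have humem : u ∉ Nv.erase w := by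
    simp only [Finset.mem_erase, hNv, Finset.mem_filter, Finset.mem_univ, true_and]
    exact fun h => hnadj' h.2
  have hwmem : w ∈ Nv := by simp [hNv, hvw]
  have h1 : (Nv.erase w).card = Nv.card - 1 := Finset.card_erase_of_mem hwmem
  have h2 : 1 ≤ Nv.card := Finset.card_pos.mpr ⟨w, hwmem⟩
  have h3 : (insert v (insert u (Nv.erase w))).card = (Nv.erase w).card + 2 := by
    rw [Finset.card_insert_of_notMem hvmem, Finset.card_insert_of_notMem humem]
  have h4 : (insert v (insert u (Nv.erase w))).card ≤ Nw.card := Finset.card_le_card hsub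
  have hle : Nw.card ≤ Nv.card := hv w (Finset.mem_univ w)
  omega

section SigmaJoin
variable {iota : Type} {U : iota → Type} {f : ∀ i, SimpleGraph (U i)}

lemma graphSigma_adj_mk {i : iota} {a b : U i} :
    (graphSigma f).Adj ⟨i, a⟩ ⟨i, b⟩ ↔ (f i).Adj a b := by
  rw [graphSigma, fromRel_adj]
  constructor
  · rintro ⟨hne, ⟨h, hadj⟩ | ⟨h, hadj⟩⟩
    · exact hadj
    · exact hadj.symm
  · intro h
    refine ⟨?_, Or.inl ⟨rfl, h⟩⟩
    simp only [ne_eq, Sigma.mk.inj_iff, heq_eq_eq, true_and]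
    exact h.ne

lemma graphSigma_adj_fst {x y : Σ i, U i} (h : (graphSigma f).Adj x y) : x.1 = y.1 := by
  rcases h with ⟨hne, ⟨h, _⟩ | ⟨h, _⟩⟩
  · exact h
  · exact h.symm

lemma sigma_eq_mk (x : Σ i, U i) {i0 : iota} (h : x.1 = i0) : ∃ b : U i0, x = ⟨i0, b⟩ := by
  obtain ⟨i, a⟩ := x
  dsimp at h
  subst h
  exact ⟨a, rfl⟩

lemma graphJoin_adj_inr_inr {m : ℕ} {a b : Σ i, U i} :
    (graphJoin (completeGraph (Fin m)) (graphSigma f)).Adj (Sum.inr a) (Sum.inr b) ↔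
      (graphSigma f).Adj a b := by
  rw [graphJoin, fromRel_adj]
  constructor
  · rintro ⟨hne, h | h⟩
    · exact h
    · exact h.symm
  · exact fun h => ⟨by simpa using h.ne, Or.inl h⟩

lemma graphJoin_adj_inl_inl {m : ℕ} {a b : Fin m} :
    (graphJoin (completeGraph (Fin m)) (graphSigma f)).Adj (Sum.inl a) (Sum.inl b) ↔ a ≠ b := by
  rw [graphJoin, fromRel_adj]
  constructor
  · rintro ⟨hne, h | h⟩
    · exact h
    · exact h.symm
  · exact fun h => ⟨by simpa using h, Or.inl h⟩

lemma graphJoin_adj_inl_any {m : ℕ} {a : Fin m} {y : (Fin m) ⊕ (Σ i, U i)}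
    (hne : Sum.inl a ≠ y) :
    (graphJoin (completeGraph (Fin m)) (graphSigma f)).Adj (Sum.inl a) y := by
  cases y with
  | inl b =>
    have hab : a ≠ b := fun h => hne (by rw [h])
    exact ⟨hne, Or.inl hab⟩
  | inr b => exact ⟨hne, Or.inl trivial⟩

lemma graphJoin_adj_inr_inl {m : ℕ} {a : Σ i, U i} {b : Fin m} :
    (graphJoin (completeGraph (Fin m)) (graphSigma f)).Adj (Sum.inr a) (Sum.inl b) :=
  (graphJoin_adj_inl_any (by simp)).symm

lemma not_indP4_join {m : ℕ} (hGs : ∀ i, ¬ IndP4 (f i)) :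
    ¬ IndP4 (graphJoin (completeGraph (Fin m)) (graphSigma f)) := by
  rintro ⟨a, b, c, d, h1, h2, h3, n1, n2, n3⟩
  have hac : a ≠ c := fun e => n2 (e ▸ h3)
  have had : a ≠ d := fun e => n1 (by rw [e]; exact h3.symm)
  have hbd : b ≠ d := fun e => n2 (e ▸ h1)
  have notl : ∀ x : (Fin m) ⊕ (Σ i, U i), (∃ y, x ≠ y ∧
      ¬(graphJoin (completeGraph (Fin m)) (graphSigma f)).Adj x y) → ∃ z, x = Sum.inr z := by
    rintro x ⟨y, hxy, hnadj⟩
    cases x with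
    | inl p => exact absurd (graphJoin_adj_inl_any hxy) hnadj
    | inr z => exact ⟨z, rfl⟩
  obtain ⟨a', rfl⟩ := notl a ⟨d, had, n2⟩
  obtain ⟨b', rfl⟩ := notl b ⟨d, hbd, n3⟩
  obtain ⟨c', rfl⟩ := notl c ⟨_, hac.symm, fun h => n1 h.symm⟩
  obtain ⟨d', rfl⟩ := notl d ⟨_, had.symm, fun h => n2 h.symm⟩
  rw [graphJoin_adj_inr_inr] at h1 h2 h3
  have hn1 : ¬ (graphSigma f).Adj a' c' := fun h => n1 (graphJoin_adj_inr_inr.mpr h)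
  have hn2 : ¬ (graphSigma f).Adj a' d' := fun h => n2 (graphJoin_adj_inr_inr.mpr h)
  have hn3 : ¬ (graphSigma f).Adj b' d' := fun h => n3 (graphJoin_adj_inr_inr.mpr h)
  have e1 := graphSigma_adj_fst h1
  have e2 := graphSigma_adj_fst h2
  have e3 := graphSigma_adj_fst h3
  obtain ⟨i0, a''⟩ := a'
  obtain ⟨b'', rfl⟩ := sigma_eq_mk b' e1.symm
  obtain ⟨c'', rfl⟩ := sigma_eq_mk c' (e1.trans e2).symm
  obtain ⟨d'', rfl⟩ := sigma_eq_mk d' ((e1.trans e2).trans e3).symm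
  rw [graphSigma_adj_mk] at h1 h2 h3
  exact hGs i0 ⟨a'', b'', c'', d'', h1, h2, h3,
    fun h => hn1 (graphSigma_adj_mk.mpr h),
    fun h => hn2 (graphSigma_adj_mk.mpr h),
    fun h => hn3 (graphSigma_adj_mk.mpr h)⟩

lemma not_indC4_join {m : ℕ} (hGs : ∀ i, ¬ IndC4 (f i)) :
    ¬ IndC4 (graphJoin (completeGraph (Fin m)) (graphSigma f)) := by
  rintro ⟨a, b, c, d, hac, hbd, h1, h2, h3, h4, n1, n2⟩
  have notl : ∀ x : (Fin m) ⊕ (Σ i, U i), (∃ y, x ≠ y ∧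
      ¬(graphJoin (completeGraph (Fin m)) (graphSigma f)).Adj x y) → ∃ z, x = Sum.inr z := by
    rintro x ⟨y, hxy, hnadj⟩
    cases x with
    | inl p => exact absurd (graphJoin_adj_inl_any hxy) hnadj
    | inr z => exact ⟨z, rfl⟩
  obtain ⟨a', rfl⟩ := notl a ⟨c, hac, n1⟩
  obtain ⟨b', rfl⟩ := notl b ⟨d, hbd, n2⟩
  obtain ⟨c', rfl⟩ := notl c ⟨_, hac.symm, fun h => n1 h.symm⟩
  obtain ⟨d', rfl⟩ := notl d ⟨_, hbd.symm, fun h => n2 h.symm⟩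
  rw [graphJoin_adj_inr_inr] at h1 h2 h3 h4
  have hn1 : ¬ (graphSigma f).Adj a' c' := fun h => n1 (graphJoin_adj_inr_inr.mpr h)
  have hn2 : ¬ (graphSigma f).Adj b' d' := fun h => n2 (graphJoin_adj_inr_inr.mpr h)
  have e1 := graphSigma_adj_fst h1
  have e2 := graphSigma_adj_fst h2
  have e3 := graphSigma_adj_fst h3
  have hac' : a' ≠ c' := fun h => hac (by rw [h])
  have hbd' : b' ≠ d' := fun h => hbd (by rw [h])
  obtain ⟨i0, a''⟩ := a'
  obtain ⟨b'', rfl⟩ := sigma_eq_mk b' e1.symm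
  obtain ⟨c'', rfl⟩ := sigma_eq_mk c' (e1.trans e2).symm
  obtain ⟨d'', rfl⟩ := sigma_eq_mk d' ((e1.trans e2).trans e3).symm
  rw [graphSigma_adj_mk] at h1 h2 h3 h4
  refine hGs i0 ⟨a'', b'', c'', d'', ?_, ?_, h1, h2, h3, h4,
    fun h => hn1 (graphSigma_adj_mk.mpr h),
    fun h => hn2 (graphSigma_adj_mk.mpr h)⟩
  · exact fun h => hac' (by rw [h])
  · exact fun h => hbd' (by rw [h])

end SigmaJoin

lemma walk_induce_supp (c : G.ConnectedComponent) :
    ∀ {x y : V}, G.Walk x y → ∀ (hx : x ∈ c.supp) (hy : y ∈ c.supp),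
      (G.induce c.supp).Reachable ⟨x, hx⟩ ⟨y, hy⟩ := by
  intro x y w
  induction w with
  | nil => intro hx hy; exact Reachable.refl _
  | @cons v x1 u h p ih =>
    intro hx hy
    have hx1 : x1 ∈ c.supp := by
      rw [ConnectedComponent.mem_supp_iff] at hx ⊢
      rw [← hx]
      exact (ConnectedComponent.connectedComponentMk_eq_of_adj h).symm
    have hadj : (G.induce c.supp).Adj ⟨v, hx⟩ ⟨x1, hx1⟩ := h
    exact (hadj.reachable).trans (ih hx1 hy)

lemma connected_induce_supp (c : G.ConnectedComponent) : (G.induce c.supp).Connected := by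
  obtain ⟨v, rfl⟩ := c.exists_rep
  rw [connected_iff]
  constructor
  · rintro ⟨x, hx⟩ ⟨y, hy⟩
    have h1 : G.Reachable x y := by
      change G.connectedComponentMk x = G.connectedComponentMk v at hx; change G.connectedComponentMk y = G.connectedComponentMk v at hy
      exact ConnectedComponent.exact (hx.trans hy.symm)
    exact walk_induce_supp _ h1.some hx hy
  · exact ⟨⟨v, ConnectedComponent.connectedComponentMk_mem⟩⟩

end Helpers

theorem stmt_7 {V : Type*} [Fintype V] (G : SimpleGraph V) (hc : G.Connected) :
    (GraphFree G cycleC4 ∧ GraphFree G pathP4) ↔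
      ((∀ u v : V, u ≠ v → G.Adj u v) ∨
        ∃ (k m : ℕ), 2 ≤ k ∧ 1 ≤ m ∧
          ∃ (U : Fin k → Type) (_ : ∀ i, Fintype (U i)) (Gs : ∀ i, SimpleGraph (U i)),
            (∀ i, (Gs i).Connected ∧ GraphFree (Gs i) cycleC4 ∧ GraphFree (Gs i) pathP4) ∧
              Nonempty (G ≃g graphJoin (completeGraph (Fin m)) (graphSigma Gs))) := by
  classical
  rw [free_C4_iff, free_P4_iff]
  constructor
  · rintro ⟨hC4, hP4⟩
    by_cases hcomp : ∀ u v : V, u ≠ v → G.Adj u v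
    · exact Or.inl hcomp
    right
    -- the set of universal vertices
    set D : Set V := {v | ∀ u, u ≠ v → G.Adj v u} with hD
    obtain ⟨v0, hv0⟩ := exists_universal hc hP4 hC4
    have hv0D : v0 ∈ D := hv0
    push_neg at hcomp
    obtain ⟨u0, v1, huv1, hnadj0⟩ := hcomp
    have hu0S : u0 ∈ Dᶜ := fun h => hnadj0 (h v1 (Ne.symm huv1))
    set H : SimpleGraph ↥(Dᶜ) := G.induce Dᶜ with hHdef
    have hHP4 : ¬ IndP4 H := fun h => hP4 (indP4_map Subtype.val (fun a b => Iff.rfl) h)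
    have hHC4 : ¬ IndC4 H :=
      fun h => hC4 (indC4_map Subtype.val Subtype.val_injective (fun a b => Iff.rfl) h)
    haveI : Fintype ↥(Dᶜ) := Fintype.ofFinite _
    -- there are at least two connected components of H
    have htwo : ∃ c1 c2 : H.ConnectedComponent, c1 ≠ c2 := by
      by_contra hone
      push_neg at hone
      have hpre : H.Preconnected := fun a b => ConnectedComponent.exact (hone _ _)
      have hconn : H.Connected := (connected_iff H).mpr ⟨hpre, ⟨⟨u0, hu0S⟩⟩⟩
      obtain ⟨x, hx⟩ := exists_universal hconn hHP4 hHC4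
      refine x.prop ?_
      intro u hu
      by_cases huD : u ∈ D
      · exact (huD x.val (Ne.symm hu)).symm
      · exact hx ⟨u, huD⟩ (fun hh => hu (congrArg Subtype.val hh))
    obtain ⟨c1, c2, hc12⟩ := htwo
    haveI : Finite H.ConnectedComponent :=
      Finite.of_surjective H.connectedComponentMk (fun c => c.exists_rep)
    obtain ⟨m, ⟨eD⟩⟩ := Finite.exists_equiv_fin ↥D
    obtain ⟨k, ⟨ek⟩⟩ := Finite.exists_equiv_fin H.ConnectedComponent
    have hm : 1 ≤ m := by
      have := (eD ⟨v0, hv0D⟩).isLt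
      omega
    have hk : 2 ≤ k := by
      by_contra hlt
      push_neg at hlt
      interval_cases k
      · exact (ek c1).elim0
      · exact hc12 (ek.injective (Subsingleton.elim _ _))
    -- component equivalences
    have hfin : ∀ c : H.ConnectedComponent, ∃ nc : ℕ, Nonempty (↥(c.supp) ≃ Fin nc) :=
      fun c => Finite.exists_equiv_fin _
    choose n hn using hfin
    let e_c' : ∀ i : Fin k, ↥((ek.symm i).supp) ≃ Fin (n (ek.symm i)) :=
      fun i => (hn (ek.symm i)).some
    let U' : Fin k → Type := fun i => Fin (n (ek.symm i))
    let Gs' : ∀ i, SimpleGraph (U' i) :=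
      fun i => (H.induce ((ek.symm i).supp)).comap (e_c' i).symm.toEmbedding
    have hmem : ∀ s : ↥(Dᶜ), s ∈ (ek.symm (ek (H.connectedComponentMk s))).supp := by
      intro s
      rw [ConnectedComponent.mem_supp_iff, ek.symm_apply_apply]
    let psi : ↥(Dᶜ) ≃ Σ i, U' i :=
      { toFun := fun s => ⟨ek (H.connectedComponentMk s), e_c' _ ⟨s, hmem s⟩⟩
        invFun := fun x => ((e_c' x.1).symm x.2).val
        left_inv := fun s => by simp
        right_inv := by
          rintro ⟨i, a⟩
          have htm : H.connectedComponentMk ((e_c' i).symm a).val = ek.symm i :=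
            ((e_c' i).symm a).prop
          have hfst : ek (H.connectedComponentMk ((e_c' i).symm a).val) = i := by
            rw [htm, ek.apply_symm_apply]
          refine Sigma.ext hfst ?_
          have key : ∀ (j : Fin k) (hj : j = i)
              (hmj : ((e_c' i).symm a).val ∈ (ek.symm j).supp),
              HEq ((e_c' j) ⟨((e_c' i).symm a).val, hmj⟩) a := by
            rintro j rfl hmj
            have h2 : (⟨((e_c' j).symm a).val, hmj⟩ : ↥((ek.symm j).supp)) = (e_c' j).symm a :=
              Subtype.ext rfl
            rw [h2, Equiv.apply_symm_apply]
          exact key _ hfst (hmem _) }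
    -- adjacency in the sigma graph
    have sigma_adj : ∀ x y : Σ i, U' i,
        (graphSigma Gs').Adj x y ↔ H.Adj (psi.symm x) (psi.symm y) := by
      rintro ⟨i, a⟩ ⟨j, b⟩
      by_cases hij : i = j
      · subst hij
        rw [graphSigma_adj_mk]
        exact Iff.rfl
      · refine iff_of_false (fun h => hij (graphSigma_adj_fst h)) (fun h => hij ?_)
        have h1 : H.connectedComponentMk (psi.symm ⟨i, a⟩) = ek.symm i :=
          ((e_c' i).symm a).prop
        have h2 : H.connectedComponentMk (psi.symm ⟨j, b⟩) = ek.symm j :=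
          ((e_c' j).symm b).prop
        have h3 := ConnectedComponent.connectedComponentMk_eq_of_adj h
        rw [h1, h2] at h3
        exact ek.symm.injective h3
    refine ⟨k, m, hk, hm, U', fun i => Fin.fintype _, Gs', fun i => ⟨?_, ?_, ?_⟩,
      ⟨⟨(Equiv.Set.sumCompl D).symm.trans (Equiv.sumCongr eD psi), ?_⟩⟩⟩
    · -- connectivity of components
      exact (Iso.connected_iff (Iso.comap (e_c' i).symm (H.induce ((ek.symm i).supp)))).mpr
        (connected_induce_supp _)
    · -- C4-freeness
      refine (free_C4_iff _).mpr (fun h => hC4 (indC4_map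
        (fun a => (((e_c' i).symm a).val.val : V)) ?_ (fun a b => Iff.rfl) h))
      exact Subtype.val_injective.comp (Subtype.val_injective.comp (e_c' i).symm.injective)
    · -- P4-freeness
      exact (free_P4_iff _).mpr (fun h => hP4 (indP4_map
        (fun a => (((e_c' i).symm a).val.val : V)) (fun a b => Iff.rfl) h))
    · -- the isomorphism
      intro u v
      simp only [Equiv.trans_apply]
      by_cases hu : u ∈ D <;> by_cases hv : v ∈ D
      · rw [Equiv.Set.sumCompl_symm_apply_of_mem hu,
          Equiv.Set.sumCompl_symm_apply_of_mem hv]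
        simp only [Equiv.sumCongr_apply, Sum.map_inl]
        rw [graphJoin_adj_inl_inl]
        constructor
        · intro hne
          exact hu v (fun e => hne (congrArg eD (Subtype.ext e.symm)))
        · intro hadj
          exact fun e => hadj.ne (congrArg Subtype.val (eD.injective e))
      · rw [Equiv.Set.sumCompl_symm_apply_of_mem hu,
          Equiv.Set.sumCompl_symm_apply_of_notMem hv]
        simp only [Equiv.sumCongr_apply, Sum.map_inl, Sum.map_inr]
        refine iff_of_true (graphJoin_adj_inl_any (by simp)) ?_
        exact hu v (fun e => hv (e ▸ hu))
      · rw [Equiv.Set.sumCompl_symm_apply_of_notMem hu,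
          Equiv.Set.sumCompl_symm_apply_of_mem hv]
        simp only [Equiv.sumCongr_apply, Sum.map_inl, Sum.map_inr]
        refine iff_of_true graphJoin_adj_inr_inl ?_
        exact (hv u (fun e => hu (e ▸ hv))).symm
      · rw [Equiv.Set.sumCompl_symm_apply_of_notMem hu,
          Equiv.Set.sumCompl_symm_apply_of_notMem hv]
        simp only [Equiv.sumCongr_apply, Sum.map_inr]
        rw [graphJoin_adj_inr_inr, sigma_adj, Equiv.symm_apply_apply, Equiv.symm_apply_apply]
        exact Iff.rfl
  · rintro (hcomp | ⟨k, m, hk, hm, U, instU, Gs, hprops, ⟨e⟩⟩)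
    · constructor
      · rintro ⟨a, b, c, d, hac, hbd, h1, h2, h3, h4, n1, n2⟩
        exact n1 (hcomp a c hac)
      · rintro ⟨a, b, c, d, h1, h2, h3, n1, n2, n3⟩
        have hac : a ≠ c := fun h => n2 (h ▸ h3)
        exact n1 (hcomp a c hac)
    · have hGsP4 : ∀ i, ¬ IndP4 (Gs i) := fun i => (free_P4_iff (Gs i)).mp (hprops i).2.2
      have hGsC4 : ∀ i, ¬ IndC4 (Gs i) := fun i => (free_C4_iff (Gs i)).mp (hprops i).2.1
      constructor
      · exact fun h => not_indC4_join hGsC4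
          (indC4_map (⇑e) e.injective (fun a b => e.map_rel_iff.symm) h)
      · exact fun h => not_indP4_join hGsP4
          (indP4_map (⇑e) (fun a b => e.map_rel_iff.symm) h)
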